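/- Let v ∈ ℝ^N with v ≠ 0, and let λ > 0 and η > 0. The function z ↦ λ·‖z‖₂ + (η/2)·‖v − z‖₂² on ℝ^N attains its minimum at z* = v · max(‖v‖₂ − λ/η, 0)/‖v‖₂; that is, λ‖z*‖₂ + (η/2)‖v − z*‖₂² ≤ λ‖z‖₂ + (η/2)‖v − z‖₂² for all z ∈ ℝ^N. -/

import Mathlib

/-- Lemma 2: the block soft-thresholding problem `z ↦ λ‖z‖₂ + (η/2)‖v − z‖₂²`
attains its minimum at `z* = v · max(‖v‖₂ − λ/η, 0)/‖v‖₂` (for `v ≠ 0`). -/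
theorem block_soft_thresholding {N : ℕ} (v : EuclideanSpace ℝ (Fin N)) (hv : v ≠ 0)
    (lam η : ℝ) (hlam : 0 < lam) (hη : 0 < η) :
    ∀ z : EuclideanSpace ℝ (Fin N),
      lam * ‖(max (‖v‖ - lam / η) 0 / ‖v‖) • v‖ +
        (η / 2) * ‖v - (max (‖v‖ - lam / η) 0 / ‖v‖) • v‖ ^ 2 ≤
      lam * ‖z‖ + (η / 2) * ‖v - z‖ ^ 2 := by
  intro z
  have hvn : 0 < ‖v‖ := norm_pos_iff.mpr hv
  by_cases hle : ‖v‖ - lam / η ≤ 0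
  · have hmax : max (‖v‖ - lam / η) 0 = 0 := max_eq_right hle
    rw [hmax]
    simp only [zero_div, zero_smul, norm_zero, sub_zero, mul_zero, zero_add]
    have h1 : ‖v - z‖ ^ 2 = ‖v‖ ^ 2 - 2 * inner ℝ v z + ‖z‖ ^ 2 := norm_sub_sq_real v z
    have h2 : (inner ℝ v z : ℝ) ≤ ‖v‖ * ‖z‖ := real_inner_le_norm v z
    have h3 : ‖v‖ * ‖z‖ ≤ (lam / η) * ‖z‖ :=
      mul_le_mul_of_nonneg_right (by linarith) (norm_nonneg z)
    have hlη : lam / η * η = lam := div_mul_cancel₀ lam hη.ne'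
    rw [h1]
    nlinarith [sq_nonneg ‖z‖, norm_nonneg z]
  · push_neg at hle
    have hmax : max (‖v‖ - lam / η) 0 = ‖v‖ - lam / η := max_eq_left hle.le
    rw [hmax]
    set c := (‖v‖ - lam / η) / ‖v‖ with hc
    have hc0 : 0 ≤ c := div_nonneg hle.le hvn.le
    have h1 : ‖c • v‖ = c * ‖v‖ := by
      rw [norm_smul, Real.norm_eq_abs, abs_of_nonneg hc0]
    have hcv : c * ‖v‖ = ‖v‖ - lam / η := div_mul_cancel₀ _ hvn.ne'
    have h2 : v - c • v = (1 - c) • v := by rw [sub_smul, one_smul]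
    have h1c : (1 - c) = (lam / η) / ‖v‖ := by
      rw [hc, eq_div_iff hvn.ne', sub_mul, one_mul, div_mul_cancel₀ _ hvn.ne']; ring
    have h3 : ‖v - c • v‖ = lam / η := by
      rw [h2, norm_smul, Real.norm_eq_abs, h1c, abs_of_nonneg (by positivity),
        div_mul_cancel₀ _ hvn.ne']
    rw [h1, hcv, h3]
    have htri : ‖v‖ ≤ ‖v - z‖ + ‖z‖ := by
      calc ‖v‖ = ‖(v - z) + z‖ := by congr 1; abel
        _ ≤ ‖v - z‖ + ‖z‖ := norm_add_le _ _
    have hq : 0 ≤ (η / 2) * (‖v - z‖ - lam / η) ^ 2 := by positivity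
    have hlη : lam / η * η = lam := div_mul_cancel₀ lam hη.ne'
    nlinarith [norm_nonneg (v - z)]
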